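/- arXiv:2501.18430 — 3 statements merged into one kernel-verified Lean document; each statement's English description precedes it below -/
import Mathlib

section
/- Let α : [0,1] → ℝ be continuous with α(x) > α(0) for all x ∈ (0,1], and suppose that the function x ↦ 1/(α(x) − α(0)) is integrable on [0,1] with ∫₀¹ dx/(α(x) − α(0)) > 1. Then there exists a unique λ > −α(0) such that ∫₀¹ dx/(λ + α(x)) = 1. -/
open MeasureTheory intervalIntegral Filter Topology

/-- Existence and uniqueness of the Malthusian eigenvalue for the house of cards
model: there is a unique `λ > −α(0)` with `∫₀¹ dx/(λ + α(x)) = 1`. -/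
theorem malthusian_eigenvalue_exists_unique
    (α : ℝ → ℝ) (hcont : ContinuousOn α (Set.Icc 0 1))
    (hpos : ∀ x ∈ Set.Ioc (0 : ℝ) 1, α 0 < α x)
    (hint : IntegrableOn (fun x => 1 / (α x - α 0)) (Set.Icc 0 1))
    (hbig : 1 < ∫ x in (0:ℝ)..1, 1 / (α x - α 0)) :
    ∃! lam : ℝ, -α 0 < lam ∧ ∫ x in (0:ℝ)..1, 1 / (lam + α x) = 1 := by
  set a := α 0 with ha
  have hge : ∀ x ∈ Set.Icc (0:ℝ) 1, a ≤ α x := by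
    intro x hx
    rcases eq_or_lt_of_le hx.1 with h | h
    · rw [← h]
    · exact (hpos x ⟨h, hx.2⟩).le
  have hden : ∀ lam : ℝ, -a < lam → ∀ x ∈ Set.Icc (0:ℝ) 1, 0 < lam + α x := by
    intro lam hlam x hx
    have := hge x hx; linarith
  have hcint : ∀ lam : ℝ, -a < lam →
      ContinuousOn (fun x => 1 / (lam + α x)) (Set.Icc 0 1) := by
    intro lam hlam
    exact ContinuousOn.div continuousOn_const (continuousOn_const.add hcont)
      (fun x hx => (hden lam hlam x hx).ne')
  have hii : ∀ lam : ℝ, -a < lam →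
      IntervalIntegrable (fun x => 1 / (lam + α x)) volume 0 1 := fun lam hlam =>
    (hcint lam hlam).intervalIntegrable_of_Icc zero_le_one
  set φ : ℝ → ℝ := fun lam => ∫ x in (0:ℝ)..1, 1 / (lam + α x) with hφ
  -- strict antitonicity
  have hanti : ∀ l m : ℝ, -a < l → l < m → φ m < φ l := by
    intro l m hl hlm
    have hm : -a < m := lt_trans hl hlm
    have hsub : (0:ℝ) < ∫ x in (0:ℝ)..1, (1 / (l + α x) - 1 / (m + α x)) := by
      apply intervalIntegral.intervalIntegral_pos_of_pos_on
      · exact (hii l hl).sub (hii m hm)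
      · intro x hx
        have hx' : x ∈ Set.Icc (0:ℝ) 1 := ⟨hx.1.le, hx.2.le⟩
        have h1 : 0 < l + α x := hden l hl x hx'
        have h2 : l + α x < m + α x := by linarith
        have := one_div_lt_one_div_of_lt h1 h2
        linarith
      · norm_num
    have := intervalIntegral.integral_sub (hii l hl) (hii m hm)
    simp only [hφ]
    rw [this] at hsub
    linarith
  -- upper bound: φ(lam) ≤ 1/(lam + a)
  have hupper : ∀ lam : ℝ, -a < lam → φ lam ≤ 1 / (lam + a) := by
    intro lam hlam
    have hb : ∀ x ∈ Set.uIoc (0:ℝ) 1, ‖(1:ℝ) / (lam + α x)‖ ≤ 1 / (lam + a) := by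
      intro x hx
      rw [Set.uIoc_of_le zero_le_one] at hx
      have hx' : x ∈ Set.Icc (0:ℝ) 1 := ⟨hx.1.le, hx.2⟩
      have h1 : 0 < lam + α x := hden lam hlam x hx'
      have h2 : lam + a ≤ lam + α x := by have := hge x hx'; linarith
      rw [Real.norm_eq_abs, abs_of_pos (by positivity)]
      exact one_div_le_one_div_of_le (by linarith) h2
    have := intervalIntegral.norm_integral_le_of_norm_le_const hb
    simp only [sub_zero, abs_one, mul_one] at this
    calc φ lam ≤ ‖φ lam‖ := le_abs_self _
      _ ≤ 1 / (lam + a) := this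
  -- lower bound near -a via dominated convergence
  obtain ⟨l₁, hl₁, hl₁lt, hφl₁⟩ : ∃ l₁ : ℝ, -a < l₁ ∧ l₁ < -a + 2 ∧ 1 < φ l₁ := by
    set lamn : ℕ → ℝ := fun n => -a + (n + 1 : ℝ)⁻¹ with hlamn
    have hlampos : ∀ n : ℕ, -a < lamn n := by
      intro n; simp only [hlamn]; have : (0:ℝ) < (n+1:ℝ)⁻¹ := by positivity
      linarith
    have key : Tendsto (fun n => φ (lamn n)) atTop
        (𝓝 (∫ x in Set.Ioc (0:ℝ) 1, 1 / (α x - a))) := by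
      have heq : ∀ n : ℕ, φ (lamn n) = ∫ x in Set.Ioc (0:ℝ) 1, 1 / (lamn n + α x) := by
        intro n
        simp only [hφ]
        rw [intervalIntegral.integral_of_le zero_le_one]
      simp only [heq]
      apply MeasureTheory.tendsto_integral_of_dominated_convergence
        (fun x => 1 / (α x - a))
      · intro n
        exact (((hcint (lamn n) (hlampos n)).mono Set.Ioc_subset_Icc_self).aestronglyMeasurable
          measurableSet_Ioc)
      · exact hint.mono_set Set.Ioc_subset_Icc_self
      · intro n
        rw [ae_restrict_iff' measurableSet_Ioc]
        refine ae_of_all _ fun x hx => ?_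
        have h0 : 0 < α x - a := by have := hpos x hx; linarith
        have h1 : 0 < lamn n + α x := hden _ (hlampos n) x ⟨hx.1.le, hx.2⟩
        have h2 : α x - a ≤ lamn n + α x := by
          simp only [hlamn]; have : (0:ℝ) < (n+1:ℝ)⁻¹ := by positivity
          linarith
        rw [Real.norm_eq_abs, abs_of_pos (by positivity)]
        exact one_div_le_one_div_of_le h0 h2
      · rw [ae_restrict_iff' measurableSet_Ioc]
        refine ae_of_all _ fun x hx => ?_
        have h0 : 0 < α x - a := by have := hpos x hx; linarith
        have hnum : Tendsto (fun n : ℕ => lamn n + α x) atTop (𝓝 (α x - a)) := by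
          have h1 : Tendsto (fun n : ℕ => ((n:ℝ) + 1)⁻¹) atTop (𝓝 0) := by
            simpa using tendsto_one_div_add_atTop_nhds_zero_nat (𝕜 := ℝ)
          have h2 : Tendsto (fun n : ℕ => -a + ((n:ℝ)+1)⁻¹ + α x) atTop (𝓝 (-a + 0 + α x)) :=
            (tendsto_const_nhds.add h1).add tendsto_const_nhds
          have h3 : -a + 0 + α x = α x - a := by ring
          rw [h3] at h2
          simpa [hlamn] using h2
        exact (tendsto_const_nhds.div hnum h0.ne')
    have hbig' : 1 < ∫ x in Set.Ioc (0:ℝ) 1, 1 / (α x - a) := by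
      rwa [intervalIntegral.integral_of_le zero_le_one] at hbig
    obtain ⟨n, hn⟩ := (key.eventually (eventually_gt_nhds hbig')).exists
    refine ⟨lamn n, hlampos n, ?_, hn⟩
    simp only [hlamn]
    have h1 : ((n:ℝ)+1)⁻¹ ≤ 1 := by
      rw [inv_le_one_iff₀]; right; linarith [Nat.cast_nonneg (α := ℝ) n]
    linarith
  -- upper point
  set l₂ : ℝ := -a + 2 with hl₂
  have hl₂gt : -a < l₂ := by rw [hl₂]; linarith
  have hφl₂ : φ l₂ < 1 := by
    have := hupper l₂ hl₂gt
    have : φ l₂ ≤ 1/2 := by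
      have h2 : l₂ + a = 2 := by rw [hl₂]; ring
      rwa [h2] at this
    linarith
  -- continuity of φ on [l₁, l₂]
  have hlip : ContinuousOn φ (Set.Icc l₁ l₂) := by
    set C : ℝ := (l₁ + a)⁻¹ * (l₁ + a)⁻¹ with hC
    have hl₁pos : 0 < l₁ + a := by linarith
    have hCpos : 0 ≤ C := by positivity
    apply LipschitzOnWith.continuousOn (K := Real.toNNReal C)
    apply LipschitzOnWith.of_dist_le_mul
    intro l hl m hm
    have hla : -a < l := lt_of_lt_of_le hl₁ hl.1
    have hma : -a < m := lt_of_lt_of_le hl₁ hm.1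
    rw [Real.dist_eq, Real.dist_eq]
    have hsub : φ l - φ m = ∫ x in (0:ℝ)..1, (1 / (l + α x) - 1 / (m + α x)) := by
      rw [intervalIntegral.integral_sub (hii l hla) (hii m hma)]
    have hb : ∀ x ∈ Set.uIoc (0:ℝ) 1,
        ‖1 / (l + α x) - 1 / (m + α x)‖ ≤ C * |l - m| := by
      intro x hx
      rw [Set.uIoc_of_le zero_le_one] at hx
      have hx' : x ∈ Set.Icc (0:ℝ) 1 := ⟨hx.1.le, hx.2⟩
      have hax := hge x hx'
      have h1 : 0 < l + α x := hden l hla x hx'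
      have h2 : 0 < m + α x := hden m hma x hx'
      have h1' : l₁ + a ≤ l + α x := by have := hl.1; linarith
      have h2' : l₁ + a ≤ m + α x := by have := hm.1; linarith
      have heq : 1 / (l + α x) - 1 / (m + α x) = (m - l) / ((l + α x) * (m + α x)) := by
        field_simp
        ring
      rw [heq, Real.norm_eq_abs, abs_div,
        abs_of_pos (show (0:ℝ) < (l + α x) * (m + α x) by positivity)]
      rw [div_le_iff₀ (by positivity)]
      have h3 : (l₁ + a) * (l₁ + a) ≤ (l + α x) * (m + α x) :=
        mul_le_mul h1' h2' hl₁pos.le h1.le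
      rw [abs_sub_comm m l]
      calc |l - m| = |l - m| * ((l₁+a)⁻¹ * (l₁+a)⁻¹) * ((l₁+a) * (l₁+a)) := by
            field_simp
        _ ≤ |l - m| * ((l₁+a)⁻¹ * (l₁+a)⁻¹) * ((l + α x) * (m + α x)) := by
            apply mul_le_mul_of_nonneg_left h3 (by positivity)
        _ = C * |l - m| * ((l + α x) * (m + α x)) := by rw [hC]; ring
    have := intervalIntegral.norm_integral_le_of_norm_le_const hb
    simp only [sub_zero, abs_one, mul_one] at this
    rw [← hsub] at this
    rw [Real.norm_eq_abs] at this
    calc |φ l - φ m| ≤ C * |l - m| := this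
      _ = ↑(Real.toNNReal C) * |l - m| := by rw [Real.coe_toNNReal _ hCpos]
  -- IVT
  have h1mem : (1:ℝ) ∈ Set.Icc (φ l₂) (φ l₁) := ⟨hφl₂.le, hφl₁.le⟩
  obtain ⟨lam, hlammem, hlameq⟩ := intermediate_value_Icc' hl₁lt.le hlip h1mem
  refine ⟨lam, ⟨lt_of_lt_of_le hl₁ hlammem.1, hlameq⟩, ?_⟩
  rintro y ⟨hy, hyeq⟩
  by_contra hne
  have hlama : -a < lam := lt_of_lt_of_le hl₁ hlammem.1
  have hyφ : φ y = 1 := hyeq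
  rcases lt_or_gt_of_ne hne with h | h
  · have := hanti y lam hy h
    rw [hyφ, hlameq] at this; exact lt_irrefl 1 this
  · have := hanti lam y hlama h
    rw [hyφ, hlameq] at this; exact lt_irrefl 1 this
end

section
/- Let α : [0,1] → ℝ be continuous and λ ∈ ℝ with λ + α(x) > 0 for all x ∈ [0,1] and ∫₀¹ dx/(λ + α(x)) = 1. Define the operator A on integrable f : [0,1] → ℝ by (Af)(x) = ∫₀¹ f(u) du − α(x) f(x), and the measure γ(dx) = dx/(λ + α(x)). Then γ is a left eigenmeasure of A with eigenvalue λ: for every bounded measurable f, ∫₀¹ (Af)(x)/(λ + α(x)) dx = λ·∫₀¹ f(x)/(λ + α(x)) dx. -/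
open MeasureTheory intervalIntegral

set_option maxHeartbeats 1000000

/-- The measure `γ(dx) = dx/(λ + α(x))` is a left eigenmeasure of the house of
cards generator `A f(x) = ∫₀¹ f − α(x) f(x)` with eigenvalue `λ`. -/
theorem house_of_cards_left_eigenmeasure
    (α : ℝ → ℝ) (hcont : ContinuousOn α (Set.Icc 0 1)) (lam : ℝ)
    (hpos : ∀ x ∈ Set.Icc (0:ℝ) 1, 0 < lam + α x)
    (hnorm : ∫ x in (0:ℝ)..1, 1 / (lam + α x) = 1)
    (f : ℝ → ℝ) (hf : Measurable f) (hbdd : ∃ C, ∀ x, |f x| ≤ C) :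
    ∫ x in (0:ℝ)..1, ((∫ u in (0:ℝ)..1, f u) - α x * f x) / (lam + α x) =
      lam * ∫ x in (0:ℝ)..1, f x / (lam + α x) := by
  obtain ⟨C, hC⟩ := hbdd
  have h01 : (0:ℝ) ≤ 1 := by norm_num
  have huIcc : Set.uIcc (0:ℝ) 1 = Set.Icc 0 1 := Set.uIcc_of_le h01
  have huIoc : Set.uIoc (0:ℝ) 1 = Set.Ioc 0 1 := Set.uIoc_of_le h01
  -- minimum of lam + α on [0,1]
  have hca : ContinuousOn (fun x => lam + α x) (Set.Icc 0 1) :=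
    continuousOn_const.add hcont
  obtain ⟨x0, hx0, hmin⟩ := isCompact_Icc.exists_isMinOn
    (Set.nonempty_Icc.mpr h01) hca
  set m := lam + α x0 with hm
  have hmpos : 0 < m := hpos x0 hx0
  have hMbound : ∀ x ∈ Set.Icc (0:ℝ) 1, |f x / (lam + α x)| ≤ C * (1/m) := by
    intro x hx
    have hx' := hpos x hx
    rw [abs_div]
    have h1 : |lam + α x| = lam + α x := abs_of_pos hx'
    rw [h1]
    have h2 : m ≤ lam + α x := hmin hx
    have : 1 / (lam + α x) ≤ 1 / m := one_div_le_one_div_of_le hmpos h2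
    calc |f x| / (lam + α x) = |f x| * (1 / (lam + α x)) := by ring
      _ ≤ C * (1/m) := by
          apply mul_le_mul (hC x) this (by positivity)
          exact le_trans (abs_nonneg _) (hC x)
  -- integrabilities
  have h1 : IntervalIntegrable (fun x => 1 / (lam + α x)) volume 0 1 := by
    apply ContinuousOn.intervalIntegrable
    rw [huIcc]
    exact continuousOn_const.div hca (fun x hx => (hpos x hx).ne')
  have h2 : IntervalIntegrable f volume 0 1 := by
    rw [intervalIntegrable_iff]
    refine Integrable.mono' (g := fun _ => C) ?_ (hf.aestronglyMeasurable) ?_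
    · exact (integrableOn_const_iff).mpr (Or.inr (by rw [huIoc, Real.volume_Ioc]; norm_num))
    · exact ae_of_all _ fun x => hC x
  have hαsm : AEStronglyMeasurable (fun x => lam + α x)
      (volume.restrict (Set.uIoc (0:ℝ) 1)) := by
    rw [huIoc]
    exact (hca.mono Set.Ioc_subset_Icc_self).aestronglyMeasurable measurableSet_Ioc
  have h3 : IntervalIntegrable (fun x => f x / (lam + α x)) volume 0 1 := by
    rw [intervalIntegrable_iff]
    refine Integrable.mono' (g := fun _ => C * (1/m)) ?_
      ((hf.aemeasurable.div hαsm.aemeasurable).aestronglyMeasurable) ?_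
    · exact (integrableOn_const_iff).mpr (Or.inr (by rw [huIoc, Real.volume_Ioc]; norm_num))
    · rw [huIoc, ae_restrict_iff' measurableSet_Ioc]
      exact ae_of_all _ fun x hx => hMbound x (Set.Ioc_subset_Icc_self hx)
  set I := ∫ u in (0:ℝ)..1, f u with hI
  have key : (∫ x in (0:ℝ)..1, (I - α x * f x) / (lam + α x)) =
      ∫ x in (0:ℝ)..1, (I * (1 / (lam + α x)) - (f x - lam * (f x / (lam + α x)))) := by
    apply intervalIntegral.integral_congr
    intro x hx
    rw [huIcc] at hx
    have h := (hpos x hx).ne'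
    field_simp
    ring
  rw [key, intervalIntegral.integral_sub (h1.const_mul I) (h2.sub (h3.const_mul lam)),
    intervalIntegral.integral_const_mul, hnorm,
    intervalIntegral.integral_sub h2 (h3.const_mul lam),
    intervalIntegral.integral_const_mul]
  ring
end

section
/- Let σ > 0, Z a standard Gaussian, and let F : ℝ → ℝ be bounded and continuously differentiable with bounded derivative. Define P_t F(x) = E[F(e^{−t}x + σ√(1−e^{−2t})Z)] for t ≥ 0 and H(x) = −∫₀^∞ (P_t F(x) − E[F(σZ)]) dt. Then H is differentiable and ‖H'‖_∞ ≤ ‖F'‖_∞. -/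
open MeasureTheory ProbabilityTheory

open Real Set Filter in
lemma integrable_id_gaussian : Integrable (fun x => x) (gaussianReal 0 1) := by
  rw [gaussianReal_of_var_ne_zero _ one_ne_zero, gaussianPDF_def,
    integrable_withDensity_iff (measurable_gaussianPDFReal 0 1).ennreal_ofReal
      (Filter.Eventually.of_forall fun x => ENNReal.ofReal_lt_top)]
  have : (fun x : ℝ => x * (ENNReal.ofReal (gaussianPDFReal 0 1 x)).toReal)
      = fun x => (√(2 * π * 1))⁻¹ * (x * rexp ((-(1/2 : ℝ)) * x ^ 2)) := by
    ext x
    rw [ENNReal.toReal_ofReal (gaussianPDFReal_nonneg 0 1 x)]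
    simp [gaussianPDFReal]
    ring_nf
  rw [this]
  exact (integrable_mul_exp_neg_mul_sq (by norm_num : (0:ℝ) < 1/2)).const_mul _

open Real in
lemma lip_of_deriv {F : ℝ → ℝ} {C : ℝ} (hF : ContDiff ℝ 1 F)
    (hF' : ∀ x, |deriv F x| ≤ C) : ∀ x y, |F x - F y| ≤ C * |x - y| := by
  have hC : 0 ≤ C := le_trans (abs_nonneg _) (hF' 0)
  have h := lipschitzWith_of_nnnorm_deriv_le (C := C.toNNReal)
    (hF.differentiable one_ne_zero) (fun x => ?_)
  · intro x y
    have := h.dist_le_mul x y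
    simpa [Real.dist_eq, Real.coe_toNNReal C hC] using this
  · rw [← NNReal.coe_le_coe]
    simpa [Real.coe_toNNReal C hC] using hF' x

/-- The candidate solution `H(x) = −∫₀^∞ (P_t F(x) − E[F(σZ)]) dt` of the
Ornstein–Uhlenbeck Poisson equation is differentiable with `‖H'‖_∞ ≤ ‖F'‖_∞`. -/
theorem ou_poisson_solution_deriv_bound
    {Ω : Type*} [MeasurableSpace Ω] (P : Measure Ω) [IsProbabilityMeasure P]
    (σ : ℝ) (hσ : 0 < σ) (Z : Ω → ℝ) (hZmeas : Measurable Z)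
    (hZ : Measure.map Z P = gaussianReal 0 1)
    (F : ℝ → ℝ) (hF : ContDiff ℝ 1 F)
    (C₀ C : ℝ) (hFbdd : ∀ x, |F x| ≤ C₀) (hF'bdd : ∀ x, |deriv F x| ≤ C)
    (H : ℝ → ℝ)
    (hH : ∀ x, H x = -∫ t in Set.Ioi (0:ℝ),
        ((∫ ω, F (Real.exp (-t) * x
            + σ * Real.sqrt (1 - Real.exp (-2 * t)) * Z ω) ∂P)
          - ∫ ω, F (σ * Z ω) ∂P)) :
    Differentiable ℝ H ∧ ∀ x, |deriv H x| ≤ C := by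
  classical
  have hC : 0 ≤ C := le_trans (abs_nonneg _) (hF'bdd 0)
  have hFc : Continuous F := hF.continuous
  have hF'c : Continuous (deriv F) := hF.continuous_deriv le_rfl
  set a : ℝ → ℝ := fun t => σ * Real.sqrt (1 - Real.exp (-2 * t)) with ha_def
  have hacont : Continuous a := by
    apply continuous_const.mul
    exact Real.continuous_sqrt.comp (continuous_const.sub (by fun_prop))
  set c : ℝ := ∫ ω, F (σ * Z ω) ∂P with hc_def
  set g : ℝ → ℝ → ℝ := fun t x => ∫ ω, F (Real.exp (-t) * x + a t * Z ω) ∂P with hg_def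
  set g' : ℝ → ℝ → ℝ := fun t x =>
    Real.exp (-t) * ∫ ω, deriv F (Real.exp (-t) * x + a t * Z ω) ∂P with hg'_def
  -- Z is integrable
  have hZint : Integrable Z P := by
    have h1 : Integrable (fun x : ℝ => x) (Measure.map Z P) := hZ ▸ integrable_id_gaussian
    have h2 := (integrable_map_measure aestronglyMeasurable_id hZmeas.aemeasurable).mp h1
    simpa [Function.comp] using h2
  set M : ℝ := ∫ ω, |Z ω| ∂P with hM_def
  have hM : 0 ≤ M := integral_nonneg fun ω => abs_nonneg _
  -- generic integrability of bounded compositions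
  have key_int : ∀ (G : ℝ → ℝ), Continuous G → ∀ (K : ℝ), (∀ x, |G x| ≤ K) →
      ∀ (p q : ℝ), Integrable (fun ω => G (p + q * Z ω)) P := by
    intro G hG K hK p q
    refine (integrable_const K).mono'
      ((hG.measurable.comp (measurable_const.add (hZmeas.const_mul q))).aestronglyMeasurable)
      (Filter.Eventually.of_forall fun ω => ?_)
    simpa using hK _
  have hFint : ∀ (p q : ℝ), Integrable (fun ω => F (p + q * Z ω)) P :=
    key_int F hFc C₀ hFbdd
  have hF'int : ∀ (p q : ℝ), Integrable (fun ω => deriv F (p + q * Z ω)) P :=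
    key_int (deriv F) hF'c C hF'bdd
  -- inner derivative
  have hg_deriv : ∀ t x, HasDerivAt (fun y => g t y) (g' t x) x := by
    intro t x
    have h := hasDerivAt_integral_of_dominated_loc_of_deriv_le (μ := P)
      (F := fun y ω => F (Real.exp (-t) * y + a t * Z ω))
      (F' := fun y ω => Real.exp (-t) * deriv F (Real.exp (-t) * y + a t * Z ω))
      (x₀ := x) (bound := fun _ => Real.exp (-t) * C) (s := Metric.ball x 1) (Metric.ball_mem_nhds x one_pos)
      (Filter.Eventually.of_forall fun y =>
        ((hFc.measurable.comp
          (measurable_const.add (hZmeas.const_mul (a t)))).aestronglyMeasurable))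
      (hFint _ _)
      (((hF'c.measurable.comp
          (measurable_const.add (hZmeas.const_mul (a t)))).aestronglyMeasurable).const_smul
          (Real.exp (-t)))
      (Filter.Eventually.of_forall fun ω => fun y _ => ?_)
      ((integrable_const _))
      (Filter.Eventually.of_forall fun ω => fun y _ => ?_)
    · have h2 := h.2
      refine h2.congr_deriv ?_
      rw [hg'_def]
      simp only
      rw [← integral_const_mul]
    · simp only [Real.norm_eq_abs]
      rw [abs_mul, abs_of_pos (Real.exp_pos _)]
      exact mul_le_mul_of_nonneg_left (hF'bdd _) (Real.exp_pos _).le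
    · have h1 : HasDerivAt (fun y : ℝ => Real.exp (-t) * y + a t * Z ω)
          (Real.exp (-t)) y := by
        simpa using ((hasDerivAt_id y).const_mul (Real.exp (-t))).add_const (a t * Z ω)
      have h2 := ((hF.differentiable one_ne_zero) _).hasDerivAt.comp y h1
      simpa [mul_comm, Function.comp_def] using h2
  -- bound on g'
  have hg'bound : ∀ t x, |g' t x| ≤ C * Real.exp (-t) := by
    intro t x
    rw [hg'_def]
    simp only [abs_mul, abs_of_pos (Real.exp_pos _)]
    rw [mul_comm C (Real.exp (-t))]
    refine mul_le_mul_of_nonneg_left ?_ (Real.exp_pos _).le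
    calc |∫ ω, deriv F (Real.exp (-t) * x + a t * Z ω) ∂P|
        ≤ ∫ ω, |deriv F (Real.exp (-t) * x + a t * Z ω)| ∂P := by
          simpa [Real.norm_eq_abs] using
            norm_integral_le_integral_norm (μ := P)
              (fun ω => deriv F (Real.exp (-t) * x + a t * Z ω))
      _ ≤ ∫ _ω, C ∂P := integral_mono (hF'int _ _).abs (integrable_const C)
            fun ω => hF'bdd _
      _ = C := by simp
  -- continuity in t
  have hgc : ∀ x, Continuous fun t => g t x := by
    intro x
    refine continuous_of_dominated (bound := fun _ => C₀)
      (fun t => (hFc.measurable.comp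
        (measurable_const.add (hZmeas.const_mul (a t)))).aestronglyMeasurable)
      (fun t => Filter.Eventually.of_forall fun ω => by simpa using hFbdd _)
      (integrable_const _)
      (Filter.Eventually.of_forall fun ω => ?_)
    exact hFc.comp (by fun_prop)
  have hg'c : ∀ x, Continuous fun t => g' t x := by
    intro x
    refine (Real.continuous_exp.comp continuous_neg).mul ?_
    refine continuous_of_dominated (bound := fun _ => C)
      (fun t => (hF'c.measurable.comp
        (measurable_const.add (hZmeas.const_mul (a t)))).aestronglyMeasurable)
      (fun t => Filter.Eventually.of_forall fun ω => by simpa using hF'bdd _)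
      (integrable_const _)
      (Filter.Eventually.of_forall fun ω => ?_)
    exact hF'c.comp (by fun_prop)
  -- pointwise decay bound on g t x - c
  have hLip : ∀ x y, |F x - F y| ≤ C * |x - y| := lip_of_deriv hF hF'bdd
  have hgbound : ∀ x : ℝ, ∀ t ∈ Set.Ioi (0:ℝ),
      |g t x - c| ≤ (C * (|x| + σ * M)) * Real.exp (-t) := by
    intro x t ht
    have ht0 : (0:ℝ) < t := ht
    have hu0 : 0 < Real.exp (-2 * t) := Real.exp_pos _
    have hu1 : Real.exp (-2 * t) ≤ 1 := Real.exp_le_one_iff.2 (by nlinarith)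
    set u : ℝ := Real.exp (-2 * t) with hu_def
    have hs0 : 0 ≤ 1 - u := by linarith
    have hsq : Real.sqrt (1 - u) ^ 2 = 1 - u := Real.sq_sqrt hs0
    have hs1 : Real.sqrt (1 - u) ≤ 1 := by
      nlinarith [Real.sqrt_nonneg (1 - u)]
    have hs2 : 1 - u ≤ Real.sqrt (1 - u) := by
      nlinarith [Real.sqrt_nonneg (1 - u)]
    have haσ : |a t - σ| ≤ σ * Real.exp (-t) := by
      rw [ha_def]
      simp only
      rw [abs_of_nonpos (by nlinarith), ← hu_def]
      have : σ - σ * Real.sqrt (1 - u) ≤ σ * u := by nlinarith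
      have hexp : u ≤ Real.exp (-t) := by
        rw [hu_def]
        apply Real.exp_le_exp.2
        linarith
      nlinarith
    have hdiff : g t x - c = ∫ ω,
        (F (Real.exp (-t) * x + a t * Z ω) - F (σ * Z ω)) ∂P := by
      rw [hg_def, hc_def]
      exact (integral_sub (hFint _ _) (by simpa using hFint 0 σ)).symm
    rw [hdiff]
    have hbnd : ∀ ω, |F (Real.exp (-t) * x + a t * Z ω) - F (σ * Z ω)| ≤
        C * Real.exp (-t) * |x| + C * (σ * Real.exp (-t)) * |Z ω| := by
      intro ω
      calc |F (Real.exp (-t) * x + a t * Z ω) - F (σ * Z ω)|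
          ≤ C * |Real.exp (-t) * x + a t * Z ω - σ * Z ω| := hLip _ _
        _ = C * |Real.exp (-t) * x + (a t - σ) * Z ω| := by ring_nf
        _ ≤ C * (|Real.exp (-t) * x| + |(a t - σ) * Z ω|) :=
            mul_le_mul_of_nonneg_left (abs_add_le _ _) hC
        _ ≤ C * Real.exp (-t) * |x| + C * (σ * Real.exp (-t)) * |Z ω| := by
            rw [abs_mul, abs_mul, abs_of_pos (Real.exp_pos _)]
            have := mul_le_mul_of_nonneg_right haσ (abs_nonneg (Z ω))
            nlinarith
    have hrhs : Integrable (fun ω => C * Real.exp (-t) * |x|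
        + C * (σ * Real.exp (-t)) * |Z ω|) P :=
      (integrable_const _).add (hZint.abs.const_mul _)
    calc |∫ ω, (F (Real.exp (-t) * x + a t * Z ω) - F (σ * Z ω)) ∂P|
        ≤ ∫ ω, (C * Real.exp (-t) * |x| + C * (σ * Real.exp (-t)) * |Z ω|) ∂P := by
          rw [← Real.norm_eq_abs]
          exact norm_integral_le_of_norm_le hrhs
            (Filter.Eventually.of_forall fun ω => by simpa using hbnd ω)
      _ = C * Real.exp (-t) * |x| + C * (σ * Real.exp (-t)) * M := by
          rw [integral_add (integrable_const _) (hZint.abs.const_mul _),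
            integral_const, integral_const_mul]
          simp [hM_def]
      _ = (C * (|x| + σ * M)) * Real.exp (-t) := by ring
  -- bound function on Ioi 0 is integrable
  have hexpint : IntegrableOn (fun t : ℝ => Real.exp (-t)) (Set.Ioi (0:ℝ)) := by
    simpa using exp_neg_integrableOn_Ioi 0 one_pos
  -- outer differentiation
  have main : ∀ x₀ : ℝ, Integrable (fun t => g' t x₀) (volume.restrict (Set.Ioi 0)) ∧
      HasDerivAt (fun x => ∫ t in Set.Ioi (0:ℝ), (g t x - c))
        (∫ t in Set.Ioi (0:ℝ), g' t x₀) x₀ := by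
    intro x₀
    refine hasDerivAt_integral_of_dominated_loc_of_deriv_le
      (μ := volume.restrict (Set.Ioi (0:ℝ)))
      (F := fun x t => g t x - c) (F' := fun x t => g' t x)
      (bound := fun t => C * Real.exp (-t)) (s := Metric.ball x₀ 1) (Metric.ball_mem_nhds x₀ one_pos)
      (Filter.Eventually.of_forall fun x =>
        (((hgc x).sub continuous_const).aestronglyMeasurable).restrict)
      ?_ ((hg'c x₀).aestronglyMeasurable.restrict)
      (Filter.Eventually.of_forall fun t x _ => by
        simpa [Real.norm_eq_abs] using hg'bound t x)
      (hexpint.const_mul C)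
      (Filter.Eventually.of_forall fun t x _ => (hg_deriv t x).sub_const c)
    · refine (hexpint.const_mul (C * (|x₀| + σ * M))).mono'
        ((((hgc x₀).sub continuous_const).aestronglyMeasurable).restrict) ?_
      rw [ae_restrict_iff' measurableSet_Ioi]
      exact Filter.Eventually.of_forall fun t ht => by
        simpa using hgbound x₀ t ht
  have hHeq : H = fun x => -∫ t in Set.Ioi (0:ℝ), (g t x - c) := funext fun x => hH x
  have hHderiv : ∀ x, HasDerivAt H (-∫ t in Set.Ioi (0:ℝ), g' t x) x := by
    intro x
    rw [hHeq]
    exact ((main x).2).neg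
  constructor
  · exact fun x => (hHderiv x).differentiableAt
  · intro x
    rw [(hHderiv x).deriv, abs_neg, ← Real.norm_eq_abs]
    calc ‖∫ t in Set.Ioi (0:ℝ), g' t x‖
        ≤ ∫ t in Set.Ioi (0:ℝ), C * Real.exp (-t) :=
          norm_integral_le_of_norm_le (hexpint.const_mul C)
            ((ae_restrict_iff' measurableSet_Ioi).2
              (Filter.Eventually.of_forall fun t _ => by simpa using hg'bound t x))
      _ = C := by rw [integral_const_mul, integral_exp_neg_Ioi_zero, mul_one]
end
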